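/- For FedNDL2, the gradient deviation after the noisy gossip step satisfies, for every round t: E‖∇f(X̄_t) − (1/n)∑_{i=1}^n ∇f_i(x_{t+1/2}^i)‖² ≤ 2L²(1 − ρ)·E[(C.E)_t] + (2L²/n)·∑_{i=1}^n D_{t,i}², where x_{t+1/2}^i = ∑_{j=1}^n w_{ij}(X_t^j + δ_t^j). -/

import Mathlib

open MeasureTheory ProbabilityTheory Finset
open scoped RealInnerProductSpace

/-- Average of `n` vectors in `ℝ^d`. -/
noncomputable def avgVec {n d : ℕ} (x : Fin n → EuclideanSpace ℝ (Fin d)) :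
    EuclideanSpace ℝ (Fin d) :=
  (n : ℝ)⁻¹ • ∑ i, x i

/-- The global objective `f = (1/n) ∑ f i`. -/
noncomputable def avgFun {n d : ℕ} (f : Fin n → EuclideanSpace ℝ (Fin d) → ℝ)
    (x : EuclideanSpace ℝ (Fin d)) : ℝ :=
  (n : ℝ)⁻¹ * ∑ i, f i x

/-- Consensus error `(1/n) ∑ ‖x i - x̄‖²`. -/
noncomputable def consensusError {n d : ℕ} (x : Fin n → EuclideanSpace ℝ (Fin d)) : ℝ :=
  (n : ℝ)⁻¹ * ∑ i, ‖x i - avgVec x‖ ^ 2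

section Aux

variable {d : ℕ}

lemma norm_sum_sq_le_card {ι : Type*} (s : Finset ι) (v : ι → EuclideanSpace ℝ (Fin d)) :
    ‖∑ i ∈ s, v i‖ ^ 2 ≤ (s.card : ℝ) * ∑ i ∈ s, ‖v i‖ ^ 2 := by
  calc ‖∑ i ∈ s, v i‖ ^ 2 ≤ (∑ i ∈ s, ‖v i‖) ^ 2 := by
        have := norm_sum_le s v
        nlinarith [norm_nonneg (∑ i ∈ s, v i)]
    _ ≤ (s.card : ℝ) * ∑ i ∈ s, ‖v i‖ ^ 2 := by
        simpa using (sq_sum_le_card_mul_sum_sq (s := s) (f := fun i => ‖v i‖))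

lemma grad_avgFun {n : ℕ} (f : Fin n → EuclideanSpace ℝ (Fin d) → ℝ)
    (hdiff : ∀ i, Differentiable ℝ (f i)) (x : EuclideanSpace ℝ (Fin d)) :
    gradient (avgFun f) x = (n : ℝ)⁻¹ • ∑ i, gradient (f i) x := by
  unfold avgFun gradient
  rw [fderiv_const_mul (by
    exact DifferentiableAt.fun_sum fun i _ => (hdiff i).differentiableAt)]
  rw [fderiv_fun_sum (fun i _ => (hdiff i).differentiableAt)]
  simp [_root_.map_smul, map_sum]

lemma abs_coord_le (x : EuclideanSpace ℝ (Fin d)) (c : Fin d) : |x c| ≤ ‖x‖ := by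
  have h1 : |x c| ^ 2 ≤ ∑ i, ‖x i‖ ^ 2 := by
    have : ‖x c‖ ^ 2 ≤ ∑ i, ‖x i‖ ^ 2 :=
      Finset.single_le_sum (f := fun i => ‖x i‖ ^ 2) (fun i _ => by positivity) (mem_univ c)
    simpa [Real.norm_eq_abs, sq_abs] using this
  rw [EuclideanSpace.norm_eq]
  have h2 : Real.sqrt (|x c| ^ 2) ≤ Real.sqrt (∑ i, ‖x i‖ ^ 2) := Real.sqrt_le_sqrt h1
  simpa [Real.sqrt_sq_eq_abs, Real.norm_eq_abs] using h2

/-- Pointwise deterministic bound. -/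
lemma pointwise_bound {n : ℕ} (hn : 1 ≤ n) (L ρ : ℝ) (hL : 0 < L)
    (f : Fin n → EuclideanSpace ℝ (Fin d) → ℝ)
    (hdiff : ∀ i, Differentiable ℝ (f i))
    (hsmooth : ∀ i x y, ‖gradient (f i) x - gradient (f i) y‖ ≤ L * ‖x - y‖)
    (w : Fin n → Fin n → ℝ)
    (hwrow : ∀ i, ∑ j, w i j = 1)
    (hwcontract : ∀ Y : Fin n → EuclideanSpace ℝ (Fin d),
      ∑ i, ‖∑ j, w i j • (avgVec Y - Y j)‖ ^ 2 ≤ (1 - ρ) * ∑ i, ‖avgVec Y - Y i‖ ^ 2)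
    (x δ : Fin n → EuclideanSpace ℝ (Fin d)) :
    ‖gradient (avgFun f) (avgVec x)
        - (n : ℝ)⁻¹ • ∑ i, gradient (f i) (∑ j, w i j • (x j + δ j))‖ ^ 2
      ≤ 2 * L ^ 2 * (1 - ρ) * consensusError x
        + 2 * L ^ 2 / n * ∑ i, ‖∑ j, w i j • δ j‖ ^ 2 := by
  have hn0 : (0 : ℝ) < n := by exact_mod_cast hn
  set xb := avgVec x with hxb
  set y : Fin n → EuclideanSpace ℝ (Fin d) := fun i => ∑ j, w i j • (x j + δ j) with hy
  set A : Fin n → EuclideanSpace ℝ (Fin d) := fun i => ∑ j, w i j • (xb - x j) with hA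
  set B : Fin n → EuclideanSpace ℝ (Fin d) := fun i => ∑ j, w i j • δ j with hB
  have hdecomp : ∀ i, xb - y i = A i - B i := by
    intro i
    have h1 : A i - B i = (∑ j, w i j) • xb - ∑ j, w i j • (x j + δ j) := by
      simp only [hA, hB, smul_sub, smul_add, Finset.sum_sub_distrib, Finset.sum_add_distrib,
        Finset.sum_smul]
      abel
    rw [h1, hwrow i, one_smul]
  have hsq : ∀ i, ‖gradient (f i) xb - gradient (f i) (y i)‖ ^ 2 ≤ L ^ 2 * ‖xb - y i‖ ^ 2 := by
    intro i
    have h := hsmooth i xb (y i)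
    nlinarith [norm_nonneg (gradient (f i) xb - gradient (f i) (y i)), norm_nonneg (xb - y i),
      hL.le]
  have htri : ∀ i, ‖xb - y i‖ ^ 2 ≤ 2 * ‖A i‖ ^ 2 + 2 * ‖B i‖ ^ 2 := by
    intro i
    rw [hdecomp i]
    have h := norm_sub_le (A i) (B i)
    have h2 : ‖A i - B i‖ ^ 2 ≤ (‖A i‖ + ‖B i‖) ^ 2 :=
      pow_le_pow_left₀ (norm_nonneg _) h 2
    nlinarith [sq_nonneg (‖A i‖ - ‖B i‖)]
  have hAc : ∑ i, ‖A i‖ ^ 2 ≤ (1 - ρ) * ∑ i, ‖xb - x i‖ ^ 2 := hwcontract x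
  have hCE : ∑ i, ‖xb - x i‖ ^ 2 = n * consensusError x := by
    unfold consensusError
    rw [← mul_assoc, mul_inv_cancel₀ (ne_of_gt hn0), one_mul]
    exact Finset.sum_congr rfl fun i _ => by rw [norm_sub_rev]
  have hsum : ∑ i, ‖gradient (f i) xb - gradient (f i) (y i)‖ ^ 2
      ≤ L ^ 2 * (2 * ((1 - ρ) * (n * consensusError x)) + 2 * ∑ i, ‖B i‖ ^ 2) := by
    calc ∑ i, ‖gradient (f i) xb - gradient (f i) (y i)‖ ^ 2
        ≤ ∑ i, L ^ 2 * (2 * ‖A i‖ ^ 2 + 2 * ‖B i‖ ^ 2) := by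
          refine Finset.sum_le_sum fun i _ => le_trans (hsq i) ?_
          exact mul_le_mul_of_nonneg_left (htri i) (by positivity)
      _ = L ^ 2 * (2 * ∑ i, ‖A i‖ ^ 2 + 2 * ∑ i, ‖B i‖ ^ 2) := by
          simp only [← Finset.mul_sum, Finset.sum_add_distrib]
      _ ≤ L ^ 2 * (2 * ((1 - ρ) * (n * consensusError x)) + 2 * ∑ i, ‖B i‖ ^ 2) := by
          have : ∑ i, ‖A i‖ ^ 2 ≤ (1 - ρ) * (n * consensusError x) := by
            rw [← hCE]; exact hAc
          nlinarith [sq_nonneg L]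
  have hmain : gradient (avgFun f) xb - (n : ℝ)⁻¹ • ∑ i, gradient (f i) (y i)
      = (n : ℝ)⁻¹ • ∑ i, (gradient (f i) xb - gradient (f i) (y i)) := by
    rw [grad_avgFun f hdiff, ← smul_sub, ← Finset.sum_sub_distrib]
  calc ‖gradient (avgFun f) xb - (n : ℝ)⁻¹ • ∑ i, gradient (f i) (y i)‖ ^ 2
      = ((n : ℝ)⁻¹) ^ 2 * ‖∑ i, (gradient (f i) xb - gradient (f i) (y i))‖ ^ 2 := by
        rw [hmain, norm_smul]
        rw [Real.norm_eq_abs, abs_of_nonneg (by positivity : (0:ℝ) ≤ (n : ℝ)⁻¹)]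
        ring
    _ ≤ ((n : ℝ)⁻¹) ^ 2 * ((n : ℝ) * ∑ i, ‖gradient (f i) xb - gradient (f i) (y i)‖ ^ 2) := by
        have h := norm_sum_sq_le_card (univ : Finset (Fin n))
          (fun i => gradient (f i) xb - gradient (f i) (y i))
        simp only [Finset.card_univ, Fintype.card_fin] at h
        exact mul_le_mul_of_nonneg_left h (by positivity)
    _ ≤ ((n : ℝ)⁻¹) ^ 2 * ((n : ℝ) *
          (L ^ 2 * (2 * ((1 - ρ) * (n * consensusError x)) + 2 * ∑ i, ‖B i‖ ^ 2))) := by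
        refine mul_le_mul_of_nonneg_left (mul_le_mul_of_nonneg_left hsum hn0.le) (by positivity)
    _ = 2 * L ^ 2 * (1 - ρ) * consensusError x + 2 * L ^ 2 / n * ∑ i, ‖B i‖ ^ 2 := by
        field_simp

end Aux

theorem fedndl2_grad_deviation_after_gossip
    {n d : ℕ} (hn : 1 ≤ n) (hd : 1 ≤ d)
    {Ω : Type*} [m0 : MeasurableSpace Ω] (μ : Measure Ω) [IsProbabilityMeasure μ]
    (L : ℝ) (hL : 0 < L)
    (f : Fin n → EuclideanSpace ℝ (Fin d) → ℝ)
    (hdiff : ∀ i, Differentiable ℝ (f i))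
    (hsmooth : ∀ i x y, ‖gradient (f i) x - gradient (f i) y‖ ≤ L * ‖x - y‖)
    (w : Fin n → Fin n → ℝ)
    (hw01 : ∀ i j, w i j ∈ Set.Icc (0:ℝ) 1)
    (hwsymm : ∀ i j, w i j = w j i)
    (hwrow : ∀ i, ∑ j, w i j = 1)
    (hwcol : ∀ j, ∑ i, w i j = 1)
    (ρ : ℝ) (hρ : ρ ∈ Set.Ioc (0:ℝ) 1)
    (hwcontract : ∀ Y : Fin n → EuclideanSpace ℝ (Fin d),
      ∑ i, ‖∑ j, w i j • (avgVec Y - Y j)‖ ^ 2 ≤ (1 - ρ) * ∑ i, ‖avgVec Y - Y i‖ ^ 2)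
    (X Δ : Fin n → Ω → EuclideanSpace ℝ (Fin d))
    (hXmeas : ∀ i, Measurable (X i))
    (D : Fin n → ℝ)
    (hΔmeas : ∀ i, Measurable (Δ i))
    (hΔ_int : ∀ i, Integrable (Δ i) μ)
    (hΔ_mean : ∀ i, ∫ ω, Δ i ω ∂μ = 0)
    (hΔ_sq_int : ∀ i, Integrable (fun ω => ‖Δ i ω‖ ^ 2) μ)
    (hΔ_var : ∀ i, ∫ ω, ‖Δ i ω‖ ^ 2 ∂μ = D i ^ 2)
    (hΔ_indep : iIndepFun Δ μ)
    (hΔ_indep_X : IndepFun (fun ω i => Δ i ω) (fun ω i => X i ω) μ)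
    (hCE_int : Integrable (fun ω => consensusError (fun i => X i ω)) μ)
    (hLHS_int : Integrable (fun ω =>
      ‖gradient (avgFun f) (avgVec (fun i => X i ω))
        - (n : ℝ)⁻¹ • ∑ i, gradient (f i) (∑ j, w i j • (X j ω + Δ j ω))‖ ^ 2) μ) :
    ∫ ω, ‖gradient (avgFun f) (avgVec (fun i => X i ω))
        - (n : ℝ)⁻¹ • ∑ i, gradient (f i) (∑ j, w i j • (X j ω + Δ j ω))‖ ^ 2 ∂μ
      ≤ 2 * L ^ 2 * (1 - ρ) * ∫ ω, consensusError (fun i => X i ω) ∂μ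
        + 2 * L ^ 2 / n * ∑ i, D i ^ 2 := by
  have hn0 : (0 : ℝ) < n := by exact_mod_cast hn
  -- inner products of noise vectors
  have hinner_meas : ∀ j k, AEStronglyMeasurable (fun ω => ⟪Δ j ω, Δ k ω⟫) μ := fun j k =>
    ((hΔmeas j).inner (hΔmeas k)).aestronglyMeasurable
  have hinner_int : ∀ j k, Integrable (fun ω => ⟪Δ j ω, Δ k ω⟫) μ := by
    intro j k
    refine Integrable.mono' (((hΔ_sq_int j).add (hΔ_sq_int k)).div_const 2)
      (hinner_meas j k) ?_
    filter_upwards with ω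
    have h := abs_real_inner_le_norm (Δ j ω) (Δ k ω)
    simp only [Pi.add_apply, Real.norm_eq_abs]
    nlinarith [norm_nonneg (Δ j ω), norm_nonneg (Δ k ω), sq_nonneg (‖Δ j ω‖ - ‖Δ k ω‖)]
  -- coordinates
  have hcoord_meas : ∀ (j : Fin n) (c : Fin d), Measurable (fun ω => Δ j ω c) := by
    intro j c
    exact (EuclideanSpace.proj c : EuclideanSpace ℝ (Fin d) →L[ℝ] ℝ).continuous.measurable.comp (hΔmeas j)
  have hcoord_int : ∀ (j : Fin n) (c : Fin d), Integrable (fun ω => Δ j ω c) μ := by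
    intro j c
    exact ((EuclideanSpace.proj c : EuclideanSpace ℝ (Fin d) →L[ℝ] ℝ)).integrable_comp (hΔ_int j)
  have hcoord_mean : ∀ (j : Fin n) (c : Fin d), ∫ ω, Δ j ω c ∂μ = 0 := by
    intro j c
    have h := (EuclideanSpace.proj c :
      EuclideanSpace ℝ (Fin d) →L[ℝ] ℝ).integral_comp_comm (hΔ_int j)
    simpa [hΔ_mean j] using h
  -- cross terms vanish
  have hcross : ∀ j k, j ≠ k → ∫ ω, ⟪Δ j ω, Δ k ω⟫ ∂μ = 0 := by
    intro j k hjk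
    have hexp : ∀ ω, ⟪Δ j ω, Δ k ω⟫ = ∑ c, Δ j ω c * Δ k ω c := by
      intro ω
      simp [PiLp.inner_apply, RCLike.inner_apply, conj_trivial]
      exact Finset.sum_congr rfl fun _ _ => mul_comm _ _
    have hprod_int : ∀ c : Fin d, Integrable (fun ω => Δ j ω c * Δ k ω c) μ := by
      intro c
      refine Integrable.mono' (((hΔ_sq_int j).add (hΔ_sq_int k)).div_const 2)
        ((hcoord_meas j c).mul (hcoord_meas k c)).aestronglyMeasurable ?_
      filter_upwards with ω
      have h1 := abs_coord_le (Δ j ω) c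
      have h2 := abs_coord_le (Δ k ω) c
      simp only [Pi.add_apply, Real.norm_eq_abs, abs_mul]
      nlinarith [abs_nonneg (Δ j ω c), abs_nonneg (Δ k ω c), norm_nonneg (Δ j ω),
        norm_nonneg (Δ k ω), mul_le_mul h1 h2 (abs_nonneg _) (norm_nonneg _),
        sq_nonneg (‖Δ j ω‖ - ‖Δ k ω‖)]
    simp only [hexp]
    rw [integral_finset_sum _ fun c _ => hprod_int c]
    refine Finset.sum_eq_zero fun c _ => ?_
    have hI : IndepFun (fun ω => Δ j ω c) (fun ω => Δ k ω c) μ :=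
      (hΔ_indep.indepFun hjk).comp (EuclideanSpace.proj c : EuclideanSpace ℝ (Fin d) →L[ℝ] ℝ).continuous.measurable
        (EuclideanSpace.proj c : EuclideanSpace ℝ (Fin d) →L[ℝ] ℝ).continuous.measurable
    have h := hI.integral_fun_mul_eq_mul_integral (hcoord_meas j c).aestronglyMeasurable
      (hcoord_meas k c).aestronglyMeasurable
    calc ∫ ω, Δ j ω c * Δ k ω c ∂μ
        = (∫ ω, Δ j ω c ∂μ) * ∫ ω, Δ k ω c ∂μ := h
      _ = 0 := by rw [hcoord_mean j c, hcoord_mean k c, mul_zero]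
  -- diagonal terms
  have hdiag : ∀ j, ∫ ω, ⟪Δ j ω, Δ j ω⟫ ∂μ = D j ^ 2 := by
    intro j
    simp only [real_inner_self_eq_norm_sq]
    exact hΔ_var j
  -- expansion of the squared norm of the mixed noise
  have hexp2 : ∀ (i : Fin n) (ω : Ω), ‖∑ j, w i j • Δ j ω‖ ^ 2
      = ∑ j, ∑ k, (w i j * w i k) * ⟪Δ j ω, Δ k ω⟫ := by
    intro i ω
    rw [← real_inner_self_eq_norm_sq, sum_inner]
    refine Finset.sum_congr rfl fun j _ => ?_
    rw [inner_sum]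
    refine Finset.sum_congr rfl fun k _ => ?_
    rw [real_inner_smul_left, real_inner_smul_right]
    ring
  have hSi_int : ∀ i, Integrable (fun ω => ‖∑ j, w i j • Δ j ω‖ ^ 2) μ := by
    intro i
    have : (fun ω => ‖∑ j, w i j • Δ j ω‖ ^ 2)
        = fun ω => ∑ j, ∑ k, (w i j * w i k) * ⟪Δ j ω, Δ k ω⟫ := funext fun ω => hexp2 i ω
    rw [this]
    exact integrable_finset_sum _ fun j _ =>
      integrable_finset_sum _ fun k _ => (hinner_int j k).const_mul _
  have hSint : ∀ i, ∫ ω, ‖∑ j, w i j • Δ j ω‖ ^ 2 ∂μ ≤ ∑ j, w i j * D j ^ 2 := by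
    intro i
    have h1 : ∫ ω, ‖∑ j, w i j • Δ j ω‖ ^ 2 ∂μ
        = ∑ j, ∑ k, (w i j * w i k) * ∫ ω, ⟪Δ j ω, Δ k ω⟫ ∂μ := by
      simp only [hexp2 i]
      rw [integral_finset_sum _ fun j _ =>
        integrable_finset_sum _ fun k _ => (hinner_int j k).const_mul _]
      refine Finset.sum_congr rfl fun j _ => ?_
      rw [integral_finset_sum _ fun k _ => (hinner_int j k).const_mul _]
      exact Finset.sum_congr rfl fun k _ => integral_const_mul _ _
    rw [h1]
    have h2 : ∀ j : Fin n, ∑ k, (w i j * w i k) * ∫ ω, ⟪Δ j ω, Δ k ω⟫ ∂μ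
        = w i j ^ 2 * D j ^ 2 := by
      intro j
      rw [Finset.sum_eq_single j]
      · rw [hdiag j]; ring
      · intro k _ hkj
        rw [hcross j k (Ne.symm hkj), mul_zero]
      · intro h; exact absurd (mem_univ j) h
    rw [Finset.sum_congr rfl fun j _ => h2 j]
    refine Finset.sum_le_sum fun j _ => ?_
    have hw := hw01 i j
    have hD : (0:ℝ) ≤ D j ^ 2 := sq_nonneg _
    have hww : w i j ^ 2 ≤ w i j := by nlinarith [mul_le_mul_of_nonneg_left hw.2 hw.1]
    exact mul_le_mul_of_nonneg_right hww hD
  -- the pointwise bound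
  have hpt : ∀ ω, ‖gradient (avgFun f) (avgVec (fun i => X i ω))
        - (n : ℝ)⁻¹ • ∑ i, gradient (f i) (∑ j, w i j • (X j ω + Δ j ω))‖ ^ 2
      ≤ 2 * L ^ 2 * (1 - ρ) * consensusError (fun i => X i ω)
        + 2 * L ^ 2 / n * ∑ i, ‖∑ j, w i j • Δ j ω‖ ^ 2 := fun ω =>
    pointwise_bound hn L ρ hL f hdiff hsmooth w hwrow hwcontract
      (fun i => X i ω) (fun i => Δ i ω)
  have hS_int : Integrable (fun ω => ∑ i, ‖∑ j, w i j • Δ j ω‖ ^ 2) μ :=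
    integrable_finset_sum _ fun i _ => hSi_int i
  calc ∫ ω, ‖gradient (avgFun f) (avgVec (fun i => X i ω))
        - (n : ℝ)⁻¹ • ∑ i, gradient (f i) (∑ j, w i j • (X j ω + Δ j ω))‖ ^ 2 ∂μ
      ≤ ∫ ω, (2 * L ^ 2 * (1 - ρ) * consensusError (fun i => X i ω)
          + 2 * L ^ 2 / n * ∑ i, ‖∑ j, w i j • Δ j ω‖ ^ 2) ∂μ := by
        refine integral_mono hLHS_int ?_ hpt
        exact (hCE_int.const_mul _).add (hS_int.const_mul _)
    _ = 2 * L ^ 2 * (1 - ρ) * ∫ ω, consensusError (fun i => X i ω) ∂μ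
          + 2 * L ^ 2 / n * ∫ ω, ∑ i, ‖∑ j, w i j • Δ j ω‖ ^ 2 ∂μ := by
        rw [integral_add (hCE_int.const_mul _) (hS_int.const_mul _),
          integral_const_mul, integral_const_mul]
    _ ≤ 2 * L ^ 2 * (1 - ρ) * ∫ ω, consensusError (fun i => X i ω) ∂μ
          + 2 * L ^ 2 / n * ∑ i, D i ^ 2 := by
        have h3 : ∫ ω, ∑ i, ‖∑ j, w i j • Δ j ω‖ ^ 2 ∂μ ≤ ∑ i, D i ^ 2 := by
          rw [integral_finset_sum _ fun i _ => hSi_int i]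
          calc ∑ i, ∫ ω, ‖∑ j, w i j • Δ j ω‖ ^ 2 ∂μ
              ≤ ∑ i, ∑ j, w i j * D j ^ 2 := Finset.sum_le_sum fun i _ => hSint i
            _ = ∑ j, (∑ i, w i j) * D j ^ 2 := by
                rw [Finset.sum_comm]
                exact Finset.sum_congr rfl fun j _ => by rw [Finset.sum_mul]
            _ = ∑ j, D j ^ 2 := Finset.sum_congr rfl fun j _ => by rw [hwcol j, one_mul]
        have hc : (0:ℝ) ≤ 2 * L ^ 2 / n := by positivity
        nlinarith [mul_le_mul_of_nonneg_left h3 hc]
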